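/- For positive integers n, p, k with 1 ≤ k ≤ n and 1 ≤ p ≤ n, B(n,p,k) = Σ_{i=0}^{n-k} [ C(k-1+i, n-p)·C(p, n-k-i)·C(n-p, i) + C(k-1+i, p)·C(n-p, n-k-i)·C(p, i) ], where B(n,p,k) = (n/k)·Σ_{r≥0} C(p,r)·C(n-p,r)·C(n-r-1,k-r-1). In particular B(n,p,k) is a nonnegative integer. -/

import Mathlib

open Finset

/-- Binomial coefficient `C(a,b)` for integers, with `C(a,b) = 0` unless `0 ≤ b ≤ a`. -/
def C (a b : ℤ) : ℚ := if 0 ≤ b ∧ b ≤ a then (Nat.choose a.toNat b.toNat : ℚ) else 0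

/-- `B(n,p,k) = (n/k) · Σ_{r≥0} C(p,r)·C(n-p,r)·C(n-r-1,k-r-1)`. -/
def B (n p k : ℕ) : ℚ :=
  ((n : ℚ) / k) * ∑ r ∈ range (n + 1),
    C p r * C ((n : ℤ) - p) r * C ((n : ℤ) - r - 1) ((k : ℤ) - r - 1)

lemma C_nat (a b : ℕ) : C (a : ℤ) (b : ℤ) = (a.choose b : ℚ) := by
  unfold C
  by_cases h : b ≤ a
  · rw [if_pos ⟨Int.natCast_nonneg b, by exact_mod_cast h⟩]
    simp
  · rw [if_neg (by push_neg; intro _; exact_mod_cast not_le.mp h),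
      Nat.choose_eq_zero_of_lt (not_le.mp h), Nat.cast_zero]

lemma vand (m n k : ℕ) :
    (m + n).choose k = ∑ j ∈ range (k + 1), m.choose j * n.choose (k - j) := by
  rw [Nat.add_choose_eq]
  exact Finset.Nat.sum_antidiagonal_eq_sum_range_succ (fun a b => m.choose a * n.choose b) k

lemma vand2 (p s k : ℕ) (hs : s < k) :
    ∑ r ∈ range k, p.choose r * s.choose r = (p + s).choose s := by
  have h1 : ∑ r ∈ range k, p.choose r * s.choose r
      = ∑ r ∈ range (s + 1), p.choose r * s.choose r :=
    (Finset.sum_subset (Finset.range_subset_range.mpr hs) (fun x _ hx => by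
      have : s < x := by simpa using hx
      simp [Nat.choose_eq_zero_of_lt this])).symm
  rw [h1, vand p s s]
  refine Finset.sum_congr rfl fun r hr => ?_
  rw [mem_range] at hr
  rw [Nat.choose_symm (by omega : r ≤ s)]

lemma tri (q r j : ℕ) (hrq : r ≤ q) :
    q.choose r * (q - r).choose j = q.choose (r + j) * (r + j).choose r := by
  by_cases h : r + j ≤ q
  · rw [Nat.choose_mul (Nat.le_add_right r j), Nat.add_sub_cancel_left]
  · have h1 : q.choose (r + j) = 0 := Nat.choose_eq_zero_of_lt (by omega)
    have h2 : (q - r).choose j = 0 := Nat.choose_eq_zero_of_lt (by omega)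
    simp [h1, h2]

lemma term_id (p k s : ℕ) (hp : 1 ≤ p) (hs : s < k) :
    p * ((p - 1).choose (k - 1 - s) * (p + s).choose s)
      = k * ((k - 1).choose s * (p + s).choose k) := by
  have e1 : p * (p - 1).choose (k - 1 - s) = p.choose (k - s) * (k - s) := by
    have h := Nat.add_one_mul_choose_eq (p - 1) (k - s - 1)
    have hp1 : p - 1 + 1 = p := by omega
    have hks : k - s - 1 + 1 = k - s := by omega
    rw [hp1, hks] at h
    rw [show k - 1 - s = k - s - 1 by omega]
    exact h
  have e2 : k * (k - 1).choose s = k.choose (k - s) * (k - s) := by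
    have h := Nat.add_one_mul_choose_eq (k - 1) (k - s - 1)
    have hp1 : k - 1 + 1 = k := by omega
    have hks : k - s - 1 + 1 = k - s := by omega
    rw [hp1, hks] at h
    rw [← h]
    congr 1
    rw [show k - s - 1 = k - 1 - s by omega, Nat.choose_symm (by omega : s ≤ k - 1)]
  have e3 : k.choose (k - s) = k.choose s := by
    rw [Nat.choose_symm (by omega : s ≤ k)]
  have e4 : p.choose (k - s) * (p + s).choose s = k.choose s * (p + s).choose k := by
    by_cases hkps : k ≤ p + s
    · have h := Nat.choose_mul (n := p + s) (k := k) (s := s) (le_of_lt hs)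
      rw [show p + s - s = p by omega] at h
      calc p.choose (k - s) * (p + s).choose s = (p + s).choose s * p.choose (k - s) := by ring
        _ = (p + s).choose k * k.choose s := h.symm
        _ = k.choose s * (p + s).choose k := by ring
    · have h1 : p.choose (k - s) = 0 := Nat.choose_eq_zero_of_lt (by omega)
      have h2 : (p + s).choose k = 0 := Nat.choose_eq_zero_of_lt (by omega)
      simp [h1, h2]
  calc p * ((p - 1).choose (k - 1 - s) * (p + s).choose s)
      = (p * (p - 1).choose (k - 1 - s)) * (p + s).choose s := by ring
    _ = (k - s) * (p.choose (k - s) * (p + s).choose s) := by rw [e1]; ring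
    _ = (k - s) * (k.choose s * (p + s).choose k) := by rw [e4]
    _ = (k.choose (k - s) * (k - s)) * (p + s).choose k := by rw [e3]; ring
    _ = k * ((k - 1).choose s * (p + s).choose k) := by rw [← e2]; ring

lemma lemA (p q k : ℕ) (hp : 1 ≤ p) :
    ∑ r ∈ range k, p.choose r * (q.choose r * (p + q - 1 - r).choose (k - 1 - r))
      = ∑ s ∈ range k, q.choose s * ((p - 1).choose (k - 1 - s) * (p + s).choose s) := by
  calc ∑ r ∈ range k, p.choose r * (q.choose r * (p + q - 1 - r).choose (k - 1 - r))
      = ∑ r ∈ range k, ∑ s ∈ range k,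
          p.choose r * s.choose r * (q.choose s * (p - 1).choose (k - 1 - s)) := by
        refine Finset.sum_congr rfl fun r hr => ?_
        rw [mem_range] at hr
        by_cases hrq : r ≤ q
        · have harg : p + q - 1 - r = (q - r) + (p - 1) := by omega
          rw [harg, vand (q - r) (p - 1) (k - 1 - r),
            show k - 1 - r + 1 = k - r by omega, Finset.mul_sum, Finset.mul_sum]
          have h1 : ∑ j ∈ range (k - r),
                p.choose r * (q.choose r * ((q - r).choose j * (p - 1).choose (k - 1 - r - j)))
              = ∑ s ∈ Ico r k,
                p.choose r * s.choose r * (q.choose s * (p - 1).choose (k - 1 - s)) := by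
            rw [Finset.sum_Ico_eq_sum_range]
            refine Finset.sum_congr rfl fun j _ => ?_
            calc p.choose r * (q.choose r * ((q - r).choose j * (p - 1).choose (k - 1 - r - j)))
                = (q.choose r * (q - r).choose j)
                    * (p.choose r * (p - 1).choose (k - 1 - (r + j))) := by
                  rw [show k - 1 - r - j = k - 1 - (r + j) by omega]; ring
              _ = (q.choose (r + j) * (r + j).choose r)
                    * (p.choose r * (p - 1).choose (k - 1 - (r + j))) := by
                  rw [tri q r j hrq]
              _ = p.choose r * (r + j).choose r
                    * (q.choose (r + j) * (p - 1).choose (k - 1 - (r + j))) := by ring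
          rw [h1]
          refine Finset.sum_subset ?_ ?_
          · intro x hx; rw [mem_Ico] at hx; rw [mem_range]; omega
          · intro x hx hx'
            rw [mem_range] at hx; rw [mem_Ico] at hx'
            have : x < r := by omega
            simp [Nat.choose_eq_zero_of_lt this]
        · have h0 : q.choose r = 0 := Nat.choose_eq_zero_of_lt (by omega)
          rw [h0]
          simp only [zero_mul, mul_zero]
          symm
          refine Finset.sum_eq_zero fun s hs => ?_
          by_cases hsr : s < r
          · simp [Nat.choose_eq_zero_of_lt hsr]
          · have : q < s := by omega
            simp [Nat.choose_eq_zero_of_lt this]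
    _ = ∑ s ∈ range k, ∑ r ∈ range k,
          p.choose r * s.choose r * (q.choose s * (p - 1).choose (k - 1 - s)) :=
        Finset.sum_comm
    _ = ∑ s ∈ range k, q.choose s * ((p - 1).choose (k - 1 - s) * (p + s).choose s) := by
        refine Finset.sum_congr rfl fun s hs => ?_
        rw [← Finset.sum_mul, vand2 p s k (mem_range.mp hs)]
        ring

lemma key2 (p q k : ℕ) (hp : 1 ≤ p) (hk : 1 ≤ k) :
    p * ∑ r ∈ range k, p.choose r * (q.choose r * (p + q - 1 - r).choose (k - 1 - r))
      = k * ∑ s ∈ range k, (k - 1).choose s * (q.choose s * (p + s).choose k) := by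
  rw [lemA p q k hp, Finset.mul_sum, Finset.mul_sum]
  refine Finset.sum_congr rfl fun s hs => ?_
  have h := term_id p k s hp (mem_range.mp hs)
  calc p * (q.choose s * ((p - 1).choose (k - 1 - s) * (p + s).choose s))
      = q.choose s * (p * ((p - 1).choose (k - 1 - s) * (p + s).choose s)) := by ring
    _ = q.choose s * (k * ((k - 1).choose s * (p + s).choose k)) := by rw [h]
    _ = k * ((k - 1).choose s * (q.choose s * (p + s).choose k)) := by ring

lemma range_ext {M : Type*} [AddCommMonoid M] (f : ℕ → M) {a b : ℕ}
    (ha : ∀ j, b ≤ j → j < a → f j = 0) (hb : ∀ j, a ≤ j → j < b → f j = 0) :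
    ∑ j ∈ range a, f j = ∑ j ∈ range b, f j := by
  rcases le_total a b with h | h
  · exact Finset.sum_subset (Finset.range_subset_range.mpr h)
      (fun x hx hx' => hb x (by simpa using hx') (by simpa using hx))
  · exact (Finset.sum_subset (Finset.range_subset_range.mpr h)
      (fun x hx hx' => ha x (by simpa using hx') (by simpa using hx))).symm

lemma lemB (p q k : ℕ) (hk : 1 ≤ k) (hkn : k ≤ p + q) :
    ∑ i ∈ range (p + q - k + 1),
        (k - 1 + i).choose q * (p.choose (p + q - k - i) * q.choose i)
      = ∑ s ∈ range k, (k - 1).choose s * (q.choose s * (p + s).choose k) := by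
  set m := p + q - k with hm
  have claim : ∀ j ≤ q,
      ∑ i ∈ range (m + 1),
          (k - 1).choose j * (i.choose (q - j) * (p.choose (m - i) * q.choose i))
        = (k - 1).choose j * (q.choose j * (p + j).choose k) := by
    intro j hjq
    set b := q - j with hb
    by_cases hbm : b ≤ m
    · have h0 : ∑ i ∈ range (m + 1),
            (k - 1).choose j * (i.choose b * (p.choose (m - i) * q.choose i))
          = ∑ i ∈ Ico b (m + 1),
            (k - 1).choose j * (i.choose b * (p.choose (m - i) * q.choose i)) :=
        (Finset.sum_subset
          (fun x hx => by rw [mem_Ico] at hx; rw [mem_range]; omega)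
          (fun x hx hx' => by
            rw [mem_range] at hx; rw [mem_Ico] at hx'
            have : x < b := by omega
            simp [Nat.choose_eq_zero_of_lt this])).symm
      rw [h0, Finset.sum_Ico_eq_sum_range, show m + 1 - b = (m - b) + 1 by omega]
      calc ∑ t ∈ range ((m - b) + 1),
            (k - 1).choose j * ((b + t).choose b * (p.choose (m - (b + t)) * q.choose (b + t)))
          = ∑ t ∈ range ((m - b) + 1),
            (k - 1).choose j * (q.choose b * ((q - b).choose t * p.choose ((m - b) - t))) := by
            refine Finset.sum_congr rfl fun t _ => ?_
            calc (k - 1).choose j * ((b + t).choose b * (p.choose (m - (b + t)) * q.choose (b + t)))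
                = (q.choose (b + t) * (b + t).choose b)
                    * ((k - 1).choose j * p.choose ((m - b) - t)) := by
                  rw [show m - (b + t) = (m - b) - t by omega]; ring
              _ = (q.choose b * (q - b).choose t)
                    * ((k - 1).choose j * p.choose ((m - b) - t)) := by
                  rw [← tri q b t (by omega)]
              _ = (k - 1).choose j * (q.choose b * ((q - b).choose t * p.choose ((m - b) - t))) := by
                  ring
        _ = (k - 1).choose j * (q.choose b * ((q - b) + p).choose (m - b)) := by
            rw [← Finset.mul_sum, ← Finset.mul_sum, ← vand (q - b) p (m - b)]
        _ = (k - 1).choose j * (q.choose j * (p + j).choose k) := by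
            have h2 : q.choose b = q.choose j := by rw [hb, Nat.choose_symm hjq]
            have h3 : ((q - b) + p).choose (m - b) = (p + j).choose k := by
              rw [show (q - b) + p = p + j by omega, show m - b = (p + j) - k by omega,
                Nat.choose_symm (by omega : k ≤ p + j)]
            rw [h2, h3]
    · have hz : ∑ i ∈ range (m + 1),
          (k - 1).choose j * (i.choose b * (p.choose (m - i) * q.choose i)) = 0 := by
        refine Finset.sum_eq_zero fun i hi => ?_
        rw [mem_range] at hi
        have : i < b := by omega
        simp [Nat.choose_eq_zero_of_lt this]
      have hz2 : (p + j).choose k = 0 := Nat.choose_eq_zero_of_lt (by omega)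
      rw [hz, hz2]; ring
  calc ∑ i ∈ range (m + 1), (k - 1 + i).choose q * (p.choose (m - i) * q.choose i)
      = ∑ i ∈ range (m + 1), ∑ j ∈ range (q + 1),
          (k - 1).choose j * (i.choose (q - j) * (p.choose (m - i) * q.choose i)) := by
        refine Finset.sum_congr rfl fun i _ => ?_
        rw [vand (k - 1) i q, Finset.sum_mul]
        exact Finset.sum_congr rfl fun j _ => by ring
    _ = ∑ j ∈ range (q + 1), ∑ i ∈ range (m + 1),
          (k - 1).choose j * (i.choose (q - j) * (p.choose (m - i) * q.choose i)) :=
        Finset.sum_comm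
    _ = ∑ j ∈ range (q + 1), (k - 1).choose j * (q.choose j * (p + j).choose k) := by
        refine Finset.sum_congr rfl fun j hj => claim j (by rw [mem_range] at hj; omega)
    _ = ∑ s ∈ range k, (k - 1).choose s * (q.choose s * (p + s).choose k) := by
        refine range_ext _ (fun j h1 h2 => ?_) (fun j h1 h2 => ?_)
        · have : k - 1 < j := by omega
          simp [Nat.choose_eq_zero_of_lt this]
        · have : q < j := by omega
          simp [Nat.choose_eq_zero_of_lt this]

theorem stmt_15 (n p k : ℕ) (hk : 1 ≤ k) (hkn : k ≤ n) (hp : 1 ≤ p) (hpn : p ≤ n) :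
    B n p k = (∑ i ∈ range (n - k + 1),
      (C ((k : ℤ) - 1 + i) ((n : ℤ) - p) * C p ((n : ℤ) - k - i) * C ((n : ℤ) - p) i +
       C ((k : ℤ) - 1 + i) p * C ((n : ℤ) - p) ((n : ℤ) - k - i) * C p i)) ∧
    ∃ m : ℕ, B n p k = (m : ℚ) := by
  obtain ⟨q, rfl⟩ : ∃ q, n = p + q := ⟨n - p, by omega⟩
  set T : ℕ := ∑ r ∈ range k, p.choose r * (q.choose r * (p + q - 1 - r).choose (k - 1 - r))
    with hT
  set R : ℕ := ∑ i ∈ range (p + q - k + 1),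
      ((k - 1 + i).choose q * (p.choose (p + q - k - i) * q.choose i)
        + (k - 1 + i).choose p * (q.choose (p + q - k - i) * p.choose i)) with hR
  -- B = ((p+q)/k) * T
  have hB : B (p + q) p k = (((p + q : ℕ) : ℚ) / k) * (T : ℚ) := by
    rw [B]
    congr 1
    have e1 : ∑ r ∈ range (p + q + 1),
          C p r * C (((p + q : ℕ) : ℤ) - p) r * C (((p + q : ℕ) : ℤ) - r - 1) ((k : ℤ) - r - 1)
        = ∑ r ∈ range k,
          C p r * C (((p + q : ℕ) : ℤ) - p) r * C (((p + q : ℕ) : ℤ) - r - 1) ((k : ℤ) - r - 1) :=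
      (Finset.sum_subset (Finset.range_subset_range.mpr (by omega))
        (fun r hr hr' => by
          rw [mem_range] at hr hr'
          have hz : C (((p + q : ℕ) : ℤ) - r - 1) ((k : ℤ) - r - 1) = 0 := by
            unfold C
            rw [if_neg]
            rintro ⟨h1, -⟩
            omega
          rw [hz, mul_zero])).symm
    rw [e1, hT, Nat.cast_sum]
    refine Finset.sum_congr rfl fun r hr => ?_
    rw [mem_range] at hr
    have c1 : (((p + q : ℕ) : ℤ) - p) = ((q : ℕ) : ℤ) := by push_cast; ring
    have c2 : (((p + q : ℕ) : ℤ) - r - 1) = (((p + q - 1 - r : ℕ)) : ℤ) := by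
      have : r + 1 ≤ p + q := by omega
      push_cast [Nat.cast_sub]
      omega
    have c3 : ((k : ℤ) - r - 1) = (((k - 1 - r : ℕ)) : ℤ) := by omega
    rw [c1, c2, c3, C_nat, C_nat, C_nat]
    push_cast
    ring
  -- RHS = R
  have hRHS : (∑ i ∈ range (p + q - k + 1),
      (C ((k : ℤ) - 1 + i) (((p + q : ℕ) : ℤ) - p) * C p (((p + q : ℕ) : ℤ) - k - i)
          * C (((p + q : ℕ) : ℤ) - p) i +
        C ((k : ℤ) - 1 + i) p * C (((p + q : ℕ) : ℤ) - p) (((p + q : ℕ) : ℤ) - k - i) * C p i))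
      = (R : ℚ) := by
    rw [hR, Nat.cast_sum]
    refine Finset.sum_congr rfl fun i hi => ?_
    rw [mem_range] at hi
    have c1 : ((k : ℤ) - 1 + i) = (((k - 1 + i : ℕ)) : ℤ) := by omega
    have c2 : (((p + q : ℕ) : ℤ) - p) = ((q : ℕ) : ℤ) := by push_cast; ring
    have c3 : (((p + q : ℕ) : ℤ) - k - i) = (((p + q - k - i : ℕ)) : ℤ) := by omega
    rw [c1, c2, c3, C_nat, C_nat, C_nat, C_nat, C_nat, C_nat]
    push_cast
    ring
  -- key identity
  have key : (p + q) * T = k * R := by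
    have hsplit : R = (∑ s ∈ range k, (k - 1).choose s * (q.choose s * (p + s).choose k))
        + (∑ s ∈ range k, (k - 1).choose s * (p.choose s * (q + s).choose k)) := by
      rw [hR, Finset.sum_add_distrib]
      congr 1
      · exact lemB p q k hk hkn
      · have h := lemB q p k hk (by omega : k ≤ q + p)
        rw [Nat.add_comm q p] at h
        exact h
    have h1 : p * T = k * ∑ s ∈ range k, (k - 1).choose s * (q.choose s * (p + s).choose k) :=
      key2 p q k hp hk
    have h2 : q * T = k * ∑ s ∈ range k, (k - 1).choose s * (p.choose s * (q + s).choose k) := by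
      by_cases hq : 1 ≤ q
      · have hTsym : T = ∑ r ∈ range k,
            q.choose r * (p.choose r * (q + p - 1 - r).choose (k - 1 - r)) := by
          rw [hT]
          refine Finset.sum_congr rfl fun r _ => ?_
          rw [show q + p - 1 - r = p + q - 1 - r from by omega]
          ring
        rw [hTsym]
        exact key2 q p k hq hk
      · have hq0 : q = 0 := by omega
        subst hq0
        have : ∑ s ∈ range k, (k - 1).choose s * (p.choose s * (0 + s).choose k) = 0 := by
          refine Finset.sum_eq_zero fun s hs => ?_
          rw [mem_range] at hs
          have hsk : s < k := by omega
          simp [Nat.choose_eq_zero_of_lt hsk]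
        rw [this]
        ring
    calc (p + q) * T = p * T + q * T := by ring
      _ = k * R := by rw [h1, h2, hsplit]; ring
  have hk0 : ((k : ℚ)) ≠ 0 := by positivity
  have hmain : B (p + q) p k = (R : ℚ) := by
    rw [hB, div_mul_eq_mul_div, div_eq_iff hk0]
    have : (((p + q) * T : ℕ) : ℚ) = ((k * R : ℕ) : ℚ) := by exact_mod_cast key
    push_cast at this ⊢
    linarith
  exact ⟨by rw [hmain, hRHS], R, hmain⟩
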